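/- Define D(t) := −8·e^{2√2·t} + 3(2+√2)·e^{4√2·t} + 6 − 3√2, x(t) := (2·e^{2√2·t} + 3(1+√2)·e^{4√2·t} + 3 − 3√2)/D(t), and y(t) := (−2·e^{2√2·t} + 3(1+√2)·e^{4√2·t} + 3 − 3√2)/D(t) for t ∈ ℝ (D(t) ≠ 0 for all real t). Then x and y are differentiable on ℝ, x(0) = 2, y(0) = 1, and for all real t: ẋ(t) = 1 − x(t)² − 2x(t)y(t) + y(t)² and ẏ(t) = 1 + x(t)² − 2x(t)y(t) − y(t)². -/

import Mathlib

lemma aux_x_ident (s u : ℝ) (hs : s ^ 2 = 2)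
    (hne : 3 * (2 + s) * u ^ 2 - 8 * u + 6 - 3 * s ≠ 0) :
    1 - ((2 * u + 3 * (1 + s) * u ^ 2 + 3 - 3 * s) / (3 * (2 + s) * u ^ 2 - 8 * u + 6 - 3 * s)) ^ 2 -
        2 * ((2 * u + 3 * (1 + s) * u ^ 2 + 3 - 3 * s) / (3 * (2 + s) * u ^ 2 - 8 * u + 6 - 3 * s)) *
          ((-2 * u + 3 * (1 + s) * u ^ 2 + 3 - 3 * s) / (3 * (2 + s) * u ^ 2 - 8 * u + 6 - 3 * s)) +
      ((-2 * u + 3 * (1 + s) * u ^ 2 + 3 - 3 * s) / (3 * (2 + s) * u ^ 2 - 8 * u + 6 - 3 * s)) ^ 2 =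
    ((4 * s * u + 12 * s * (1 + s) * u ^ 2) * (3 * (2 + s) * u ^ 2 - 8 * u + 6 - 3 * s) -
        (2 * u + 3 * (1 + s) * u ^ 2 + 3 - 3 * s) * (-16 * s * u + 12 * s * (2 + s) * u ^ 2)) /
      (3 * (2 + s) * u ^ 2 - 8 * u + 6 - 3 * s) ^ 2 := by
  have key : (3 * (2 + s) * u ^ 2 - 8 * u + 6 - 3 * s) ^ 2
      - (2 * u + 3 * (1 + s) * u ^ 2 + 3 - 3 * s) ^ 2
      - 2 * (2 * u + 3 * (1 + s) * u ^ 2 + 3 - 3 * s) * (-2 * u + 3 * (1 + s) * u ^ 2 + 3 - 3 * s)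
      + (-2 * u + 3 * (1 + s) * u ^ 2 + 3 - 3 * s) ^ 2 =
      (4 * s * u + 12 * s * (1 + s) * u ^ 2) * (3 * (2 + s) * u ^ 2 - 8 * u + 6 - 3 * s) -
        (2 * u + 3 * (1 + s) * u ^ 2 + 3 - 3 * s) * (-16 * s * u + 12 * s * (2 + s) * u ^ 2) := by
    linear_combination (-(9 * u ^ 4 - 60 * u ^ 3 + 54 * u ^ 2 - 60 * u + 9)) * hs
  have lhs_eq : 1 - ((2 * u + 3 * (1 + s) * u ^ 2 + 3 - 3 * s) / (3 * (2 + s) * u ^ 2 - 8 * u + 6 - 3 * s)) ^ 2 -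
        2 * ((2 * u + 3 * (1 + s) * u ^ 2 + 3 - 3 * s) / (3 * (2 + s) * u ^ 2 - 8 * u + 6 - 3 * s)) *
          ((-2 * u + 3 * (1 + s) * u ^ 2 + 3 - 3 * s) / (3 * (2 + s) * u ^ 2 - 8 * u + 6 - 3 * s)) +
      ((-2 * u + 3 * (1 + s) * u ^ 2 + 3 - 3 * s) / (3 * (2 + s) * u ^ 2 - 8 * u + 6 - 3 * s)) ^ 2 =
      ((3 * (2 + s) * u ^ 2 - 8 * u + 6 - 3 * s) ^ 2
      - (2 * u + 3 * (1 + s) * u ^ 2 + 3 - 3 * s) ^ 2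
      - 2 * (2 * u + 3 * (1 + s) * u ^ 2 + 3 - 3 * s) * (-2 * u + 3 * (1 + s) * u ^ 2 + 3 - 3 * s)
      + (-2 * u + 3 * (1 + s) * u ^ 2 + 3 - 3 * s) ^ 2) / (3 * (2 + s) * u ^ 2 - 8 * u + 6 - 3 * s) ^ 2 := by
    generalize (3 * (2 + s) * u ^ 2 - 8 * u + 6 - 3 * s) = d at hne ⊢
    field_simp
  rw [lhs_eq, key]

lemma aux_y_ident (s u : ℝ) (hs : s ^ 2 = 2)
    (hne : 3 * (2 + s) * u ^ 2 - 8 * u + 6 - 3 * s ≠ 0) :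
    1 + ((2 * u + 3 * (1 + s) * u ^ 2 + 3 - 3 * s) / (3 * (2 + s) * u ^ 2 - 8 * u + 6 - 3 * s)) ^ 2 -
        2 * ((2 * u + 3 * (1 + s) * u ^ 2 + 3 - 3 * s) / (3 * (2 + s) * u ^ 2 - 8 * u + 6 - 3 * s)) *
          ((-2 * u + 3 * (1 + s) * u ^ 2 + 3 - 3 * s) / (3 * (2 + s) * u ^ 2 - 8 * u + 6 - 3 * s)) -
      ((-2 * u + 3 * (1 + s) * u ^ 2 + 3 - 3 * s) / (3 * (2 + s) * u ^ 2 - 8 * u + 6 - 3 * s)) ^ 2 =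
    ((-4 * s * u + 12 * s * (1 + s) * u ^ 2) * (3 * (2 + s) * u ^ 2 - 8 * u + 6 - 3 * s) -
        (-2 * u + 3 * (1 + s) * u ^ 2 + 3 - 3 * s) * (-16 * s * u + 12 * s * (2 + s) * u ^ 2)) /
      (3 * (2 + s) * u ^ 2 - 8 * u + 6 - 3 * s) ^ 2 := by
  have key : (3 * (2 + s) * u ^ 2 - 8 * u + 6 - 3 * s) ^ 2
      + (2 * u + 3 * (1 + s) * u ^ 2 + 3 - 3 * s) ^ 2
      - 2 * (2 * u + 3 * (1 + s) * u ^ 2 + 3 - 3 * s) * (-2 * u + 3 * (1 + s) * u ^ 2 + 3 - 3 * s)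
      - (-2 * u + 3 * (1 + s) * u ^ 2 + 3 - 3 * s) ^ 2 =
      (-4 * s * u + 12 * s * (1 + s) * u ^ 2) * (3 * (2 + s) * u ^ 2 - 8 * u + 6 - 3 * s) -
        (-2 * u + 3 * (1 + s) * u ^ 2 + 3 - 3 * s) * (-16 * s * u + 12 * s * (2 + s) * u ^ 2) := by
    linear_combination (-(9 * u ^ 4 - 36 * u ^ 3 + 54 * u ^ 2 - 36 * u + 9)) * hs
  have lhs_eq : 1 + ((2 * u + 3 * (1 + s) * u ^ 2 + 3 - 3 * s) / (3 * (2 + s) * u ^ 2 - 8 * u + 6 - 3 * s)) ^ 2 -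
        2 * ((2 * u + 3 * (1 + s) * u ^ 2 + 3 - 3 * s) / (3 * (2 + s) * u ^ 2 - 8 * u + 6 - 3 * s)) *
          ((-2 * u + 3 * (1 + s) * u ^ 2 + 3 - 3 * s) / (3 * (2 + s) * u ^ 2 - 8 * u + 6 - 3 * s)) -
      ((-2 * u + 3 * (1 + s) * u ^ 2 + 3 - 3 * s) / (3 * (2 + s) * u ^ 2 - 8 * u + 6 - 3 * s)) ^ 2 =
      ((3 * (2 + s) * u ^ 2 - 8 * u + 6 - 3 * s) ^ 2
      + (2 * u + 3 * (1 + s) * u ^ 2 + 3 - 3 * s) ^ 2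
      - 2 * (2 * u + 3 * (1 + s) * u ^ 2 + 3 - 3 * s) * (-2 * u + 3 * (1 + s) * u ^ 2 + 3 - 3 * s)
      - (-2 * u + 3 * (1 + s) * u ^ 2 + 3 - 3 * s) ^ 2) / (3 * (2 + s) * u ^ 2 - 8 * u + 6 - 3 * s) ^ 2 := by
    generalize (3 * (2 + s) * u ^ 2 - 8 * u + 6 - 3 * s) = d at hne ⊢
    field_simp
  rw [lhs_eq, key]

/-- The explicit functions `x`, `y` solve the kinetic system
`ẋ = 1 − x² − 2xy + y²`, `ẏ = 1 + x² − 2xy − y²` with `x(0) = 2`, `y(0) = 1`. -/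
theorem stmt_15 (D x y : ℝ → ℝ)
    (hD : ∀ t : ℝ, D t =
      -8 * Real.exp (2 * Real.sqrt 2 * t)
        + 3 * (2 + Real.sqrt 2) * Real.exp (4 * Real.sqrt 2 * t)
        + 6 - 3 * Real.sqrt 2)
    (hx : ∀ t : ℝ, x t =
      (2 * Real.exp (2 * Real.sqrt 2 * t)
        + 3 * (1 + Real.sqrt 2) * Real.exp (4 * Real.sqrt 2 * t)
        + 3 - 3 * Real.sqrt 2) / D t)
    (hy : ∀ t : ℝ, y t =
      (-2 * Real.exp (2 * Real.sqrt 2 * t)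
        + 3 * (1 + Real.sqrt 2) * Real.exp (4 * Real.sqrt 2 * t)
        + 3 - 3 * Real.sqrt 2) / D t) :
    Differentiable ℝ x ∧ Differentiable ℝ y ∧ x 0 = 2 ∧ y 0 = 1 ∧
    (∀ t : ℝ, HasDerivAt x (1 - x t ^ 2 - 2 * x t * y t + y t ^ 2) t) ∧
    (∀ t : ℝ, HasDerivAt y (1 + x t ^ 2 - 2 * x t * y t - y t ^ 2) t) := by
  set s := Real.sqrt 2 with hsdef
  have hs : s ^ 2 = 2 := Real.sq_sqrt (by norm_num)
  have hs0 : (0:ℝ) ≤ s := Real.sqrt_nonneg 2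
  have hE2 : ∀ t : ℝ, Real.exp (4 * s * t) = Real.exp (2 * s * t) ^ 2 := by
    intro t
    rw [sq, ← Real.exp_add]; ring_nf
  have hDu : ∀ t : ℝ,
      D t = 3 * (2 + s) * Real.exp (2 * s * t) ^ 2 - 8 * Real.exp (2 * s * t)
        + 6 - 3 * s := by
    intro t; rw [hD t, hE2 t]; ring
  have hDpos : ∀ t : ℝ, 0 < D t := by
    intro t
    rw [hDu t]
    set u := Real.exp (2 * s * t) with hu
    have hupos : 0 < u := Real.exp_pos _
    nlinarith [sq_nonneg (6 * (2 + s) * u - 8), sq_nonneg u, sq_nonneg (s - 1),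
      sq_nonneg (u - 1), hupos]
  have hDne : ∀ t : ℝ, D t ≠ 0 := fun t => (hDpos t).ne'
  have hdu : ∀ t : ℝ, HasDerivAt (fun t => Real.exp (2 * s * t))
      (2 * s * Real.exp (2 * s * t)) t := by
    intro t
    have h1 : HasDerivAt (fun t : ℝ => 2 * s * t) (2 * s) t := by
      simpa using (hasDerivAt_id t).const_mul (2 * s)
    simpa [mul_comm] using h1.exp
  have hN1 : ∀ t : ℝ, HasDerivAt
      (fun t => 2 * Real.exp (2 * s * t) + 3 * (1 + s) * Real.exp (2 * s * t) ^ 2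
        + 3 - 3 * s)
      (4 * s * Real.exp (2 * s * t) + 12 * s * (1 + s) * Real.exp (2 * s * t) ^ 2) t := by
    intro t
    have h := ((((hdu t).const_mul 2).add
      (((hdu t).pow 2).const_mul (3 * (1 + s)))).add_const 3).sub_const (3 * s)
    refine h.congr_deriv ?_
    push_cast
    ring
  have hN2 : ∀ t : ℝ, HasDerivAt
      (fun t => -2 * Real.exp (2 * s * t) + 3 * (1 + s) * Real.exp (2 * s * t) ^ 2
        + 3 - 3 * s)
      (-4 * s * Real.exp (2 * s * t) + 12 * s * (1 + s) * Real.exp (2 * s * t) ^ 2) t := by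
    intro t
    have h := ((((hdu t).const_mul (-2)).add
      (((hdu t).pow 2).const_mul (3 * (1 + s)))).add_const 3).sub_const (3 * s)
    refine h.congr_deriv ?_
    push_cast
    ring
  have hDder : ∀ t : ℝ, HasDerivAt D
      (-16 * s * Real.exp (2 * s * t) + 12 * s * (2 + s) * Real.exp (2 * s * t) ^ 2) t := by
    intro t
    have hfun : D = fun t => -8 * Real.exp (2 * s * t)
        + 3 * (2 + s) * Real.exp (2 * s * t) ^ 2 + 6 - 3 * s := by
      funext t; rw [hD t, hE2 t]
    rw [hfun]
    have h := ((((hdu t).const_mul (-8)).add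
      (((hdu t).pow 2).const_mul (3 * (2 + s)))).add_const 6).sub_const (3 * s)
    refine h.congr_deriv ?_
    push_cast
    ring
  have hxfun : x = fun t => (2 * Real.exp (2 * s * t)
      + 3 * (1 + s) * Real.exp (2 * s * t) ^ 2 + 3 - 3 * s) / D t := by
    funext t; rw [hx t, hE2 t]
  have hyfun : y = fun t => (-2 * Real.exp (2 * s * t)
      + 3 * (1 + s) * Real.exp (2 * s * t) ^ 2 + 3 - 3 * s) / D t := by
    funext t; rw [hy t, hE2 t]
  have hxder : ∀ t : ℝ, HasDerivAt x (1 - x t ^ 2 - 2 * x t * y t + y t ^ 2) t := by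
    intro t
    have h := (hN1 t).div (hDder t) (hDne t)
    simp only [Pi.div_def] at h
    rw [← hxfun] at h
    refine h.congr_deriv (Eq.symm ?_)
    rw [hx t, hy t, hDu t, hE2 t]
    set u := Real.exp (2 * s * t) with hu
    have hne : 3 * (2 + s) * u ^ 2 - 8 * u + 6 - 3 * s ≠ 0 := hDu t ▸ hDne t
    exact aux_x_ident s u hs hne
  have hyder : ∀ t : ℝ, HasDerivAt y (1 + x t ^ 2 - 2 * x t * y t - y t ^ 2) t := by
    intro t
    have h := (hN2 t).div (hDder t) (hDne t)
    simp only [Pi.div_def] at h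
    rw [← hyfun] at h
    refine h.congr_deriv (Eq.symm ?_)
    rw [hx t, hy t, hDu t, hE2 t]
    set u := Real.exp (2 * s * t) with hu
    have hne : 3 * (2 + s) * u ^ 2 - 8 * u + 6 - 3 * s ≠ 0 := hDu t ▸ hDne t
    exact aux_y_ident s u hs hne
  have hD0 : D 0 = 4 := by
    rw [hD 0]
    simp [Real.exp_zero]
    ring
  refine ⟨fun t => (hxder t).differentiableAt, fun t => (hyder t).differentiableAt, ?_, ?_,
    hxder, hyder⟩
  · rw [hx 0, hD0]
    simp [Real.exp_zero]
    ring
  · rw [hy 0, hD0]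
    simp [Real.exp_zero]
    ring
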